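/- Let t ≥ 2 be an integer and k an even positive integer. Then the radio k-labeling number of the infinite distance graph D(1,2,...,t) satisfies rl_k(D(1,2,...,t)) ≤ (t/2)k² + k. -/

import Mathlib

def distGraph (D : Set ℤ) : SimpleGraph ℤ where
  Adj i j := i ≠ j ∧ |i - j| ∈ D
  symm := by
    constructor
    intro i j h
    exact ⟨h.1.symm, by rw [abs_sub_comm]; exact h.2⟩
  loopless := by
    constructor
    intro i h
    exact h.1 rfl

def IsRadioLabeling (G : SimpleGraph ℤ) (k : ℕ) (c : ℤ → ℕ) : Prop :=
  ∀ x y : ℤ, x ≠ y → (k : ℤ) + 1 - G.dist x y ≤ |(c x : ℤ) - c y|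

lemma walk_bound (t : ℕ) {x y : ℤ}
    (w : (distGraph {d : ℤ | 1 ≤ d ∧ d ≤ (t : ℤ)}).Walk x y) :
    |x - y| ≤ t * w.length := by
  induction w with
  | nil => simp
  | @cons a b cc h p ih =>
    have h2 : |a - b| ≤ (t : ℤ) := h.2.2
    have h3 : |a - cc| ≤ |a - b| + |b - cc| := by
      have he : a - cc = (a - b) + (b - cc) := by ring
      rw [he]; exact abs_add_le _ _
    simp only [SimpleGraph.Walk.length_cons]
    push_cast
    nlinarith [abs_nonneg (b - cc)]

lemma reach_add (t : ℕ) (ht : 2 ≤ t) (x : ℤ) (n : ℕ) :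
    (distGraph {d : ℤ | 1 ≤ d ∧ d ≤ (t : ℤ)}).Reachable x (x + n) := by
  induction n with
  | zero =>
    simp only [Nat.cast_zero, add_zero]
    exact ⟨SimpleGraph.Walk.nil⟩
  | succ n ih =>
    have hadj : (distGraph {d : ℤ | 1 ≤ d ∧ d ≤ (t : ℤ)}).Adj (x + (n : ℤ)) (x + (n : ℤ) + 1) := by
      refine ⟨by omega, ?_⟩
      have he : x + (n : ℤ) - (x + (n : ℤ) + 1) = -1 := by ring
      simp only [Set.mem_setOf_eq, he]
      norm_num
      omega
    have h2 := ih.trans hadj.reachable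
    have he : x + ((n + 1 : ℕ) : ℤ) = x + (n : ℤ) + 1 := by push_cast; ring
    rw [he]; exact h2

lemma reach_all (t : ℕ) (ht : 2 ≤ t) (x y : ℤ) :
    (distGraph {d : ℤ | 1 ≤ d ∧ d ≤ (t : ℤ)}).Reachable x y := by
  rcases le_total x y with h | h
  · obtain ⟨n, hn⟩ := Int.le.dest h
    have := reach_add t ht x n
    rwa [hn] at this
  · obtain ⟨n, hn⟩ := Int.le.dest h
    have := reach_add t ht y n
    rw [hn] at this
    exact this.symm

lemma dist_lb (t : ℕ) (ht : 2 ≤ t) (x y : ℤ) :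
    |x - y| ≤ t * ((distGraph {d : ℤ | 1 ≤ d ∧ d ≤ (t : ℤ)}).dist x y) := by
  obtain ⟨w, hw⟩ := (reach_all t ht x y).exists_walk_length_eq_dist
  have := walk_bound t w
  rw [hw] at this
  exact_mod_cast this

/-- minimal absolute value in a congruence class, nonzero residue case -/
lemma min_mod_bound (P δ z q : ℤ) (hP : 0 < P) (h0 : 0 < δ) (hδP : δ < P)
    (hz : z = δ + P * q) : min δ (P - δ) ≤ |z| := by
  rcases lt_trichotomy q 0 with h | h | h
  · have h1 : q ≤ -1 := by omega
    have h2 : P * q ≤ P * (-1) := by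
      apply mul_le_mul_of_nonneg_left h1 (le_of_lt hP)
    have hzneg : z < 0 := by nlinarith
    rw [abs_of_neg hzneg]
    have : P - δ ≤ -z := by nlinarith
    exact le_trans (min_le_right _ _) this
  · subst h
    rw [mul_zero, add_zero] at hz
    subst hz
    rw [abs_of_pos h0]
    exact min_le_left _ _
  · have h1 : 1 ≤ q := by omega
    have h2 : P * 1 ≤ P * q := by
      apply mul_le_mul_of_nonneg_left h1 (le_of_lt hP)
    rw [abs_of_pos (by nlinarith)]
    have : δ ≤ z := by nlinarith
    exact le_trans (min_le_left _ _) this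

/-- minimal absolute value in a congruence class, zero residue case -/
lemma zero_mod_bound (P z q : ℤ) (hP : 0 < P) (hz : z = P * q) (hz0 : z ≠ 0) :
    P ≤ |z| := by
  have hq : q ≠ 0 := by rintro rfl; simp at hz; exact hz0 hz
  have h1 : 1 ≤ |q| := Int.one_le_abs (by omega)
  calc P = P * 1 := by ring
    _ ≤ P * |q| := by apply mul_le_mul_of_nonneg_left h1 (le_of_lt hP)
    _ = |z| := by rw [hz, abs_mul, abs_of_pos hP]

/-- the labeling function on residues -/
def Flab (T K M r : ℤ) : ℤ :=
  if r ≤ T * M + 1 then r * K else M + (r - (T * M + 2)) * K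

set_option maxHeartbeats 1600000 in
theorem radio_upper_D1t_even (t k : ℕ) (ht : 2 ≤ t) (hk : 1 ≤ k) (hke : Even k) :
    ∃ c : ℤ → ℕ, IsRadioLabeling (distGraph {d : ℤ | 1 ≤ d ∧ d ≤ (t : ℤ)}) k c ∧
      ∀ x : ℤ, (c x : ℝ) ≤ ((t : ℝ) / 2) * (k : ℝ) ^ 2 + k := by
  obtain ⟨mn, hmn⟩ := hke
  obtain ⟨T, hT⟩ : ∃ T : ℤ, T = (t : ℤ) := ⟨_, rfl⟩
  obtain ⟨K, hK⟩ : ∃ K : ℤ, K = (k : ℤ) := ⟨_, rfl⟩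
  obtain ⟨M, hM⟩ : ∃ M : ℤ, M = (mn : ℤ) := ⟨_, rfl⟩
  have hKM : K = 2 * M := by rw [hK, hM]; exact_mod_cast by omega
  have hT2 : 2 ≤ T := by rw [hT]; exact_mod_cast ht
  have hM1 : 1 ≤ M := by
    have h1 : 1 ≤ (k : ℤ) := by exact_mod_cast hk
    omega
  have hK1 : 2 ≤ K := by omega
  obtain ⟨P, hP⟩ : ∃ P : ℤ, P = T * K + 3 := ⟨_, rfl⟩
  have hTM : 2 ≤ T * M := by nlinarith
  have hTK : T * K = 2 * (T * M) := by rw [hKM]; ring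
  have hP0 : 0 < P := by omega
  -- F nonneg on nonneg inputs
  have hFnn : ∀ r : ℤ, 0 ≤ r → 0 ≤ Flab T K M r := by
    intro r hr
    unfold Flab
    split
    · exact mul_nonneg hr (by omega)
    · rename_i h
      have : 0 ≤ (r - (T * M + 2)) * K := mul_nonneg (by omega) (by omega)
      omega
  refine ⟨fun x => (Flab T K M (x % P)).toNat, ?_, ?_⟩
  · -- radio labeling condition
    have hcast : ∀ x : ℤ, (((Flab T K M (x % P)).toNat : ℤ)) = Flab T K M (x % P) := by
      intro x
      exact Int.toNat_of_nonneg (hFnn _ (Int.emod_nonneg x (by omega)))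
    -- key claim
    have key : ∀ x y : ℤ, x ≠ y →
        K ≤ |Flab T K M (x % P) - Flab T K M (y % P)| ∨
        T * (K - |Flab T K M (x % P) - Flab T K M (y % P)|) + 1 ≤ |x - y| := by
      have symmkey : ∀ x y : ℤ, x ≠ y → y % P ≤ x % P →
          K ≤ |Flab T K M (x % P) - Flab T K M (y % P)| ∨
          T * (K - |Flab T K M (x % P) - Flab T K M (y % P)|) + 1 ≤ |x - y| := by
        intro x y hxy hle
        obtain ⟨r, hr⟩ : ∃ r : ℤ, r = x % P := ⟨_, rfl⟩
        obtain ⟨s, hs⟩ : ∃ s : ℤ, s = y % P := ⟨_, rfl⟩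
        rw [← hr, ← hs] at hle ⊢
        have hr0 : 0 ≤ r := hr ▸ Int.emod_nonneg x (by omega)
        have hrP : r < P := hr ▸ Int.emod_lt_of_pos x hP0
        have hs0 : 0 ≤ s := hs ▸ Int.emod_nonneg y (by omega)
        have hsP : s < P := hs ▸ Int.emod_lt_of_pos y hP0
        obtain ⟨δ, hδ⟩ : ∃ δ : ℤ, δ = r - s := ⟨_, rfl⟩
        have hδ0 : 0 ≤ δ := by omega
        have hδP : δ < P := by omega
        have hmod : (x - y) % P = δ := by
          have h1 : (x - y) % P = (x % P - y % P) % P := Int.sub_emod x y P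
          rw [h1, ← hr, ← hs, ← hδ]
          exact Int.emod_eq_of_lt hδ0 hδP
        have hxy0 : x - y ≠ 0 := sub_ne_zero_of_ne hxy
        have hdq : x - y = δ + P * ((x - y) / P) := by
          have := Int.emod_add_mul_ediv (x - y) P
          omega
        by_cases hδz : δ = 0
        · right
          have hFF : Flab T K M r - Flab T K M s = 0 := by
            rw [show r = s by omega]; ring
          rw [hFF, abs_zero, sub_zero]
          have hzb : P ≤ |x - y| := by
            apply zero_mod_bound P (x - y) ((x - y) / P) hP0 _ hxy0
            omega
          omega
        · have hδ1 : 1 ≤ δ := by omega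
          have hmin : min δ (P - δ) ≤ |x - y| :=
            min_mod_bound P δ (x - y) ((x - y) / P) hP0 (by omega) hδP hdq
          by_cases hsA : s ≤ T * M + 1
          · by_cases hrA : r ≤ T * M + 1
            · -- both in A
              left
              have hFF : Flab T K M r - Flab T K M s = δ * K := by
                unfold Flab
                rw [if_pos hrA, if_pos hsA, hδ]; ring
              rw [hFF, abs_of_nonneg (mul_nonneg hδ0 (by omega))]
              nlinarith
            · -- r in B, s in A
              have hrB : T * M + 2 ≤ r := by omega
              obtain ⟨a, ha⟩ : ∃ a : ℤ, a = δ - (T * M + 2) := ⟨_, rfl⟩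
              have hFF : Flab T K M r - Flab T K M s = M + a * K := by
                unfold Flab
                rw [if_neg hrA, if_pos hsA, ha, hδ]; ring
              rcases lt_trichotomy a 0 with haneg | ha0 | hapos
              · rcases eq_or_lt_of_le (show a ≤ -1 by omega) with hm1 | hm2
                · -- a = -1
                  right
                  have hv : Flab T K M r - Flab T K M s = M - K := by
                    rw [hFF, hm1]; ring
                  rw [hv, abs_of_nonpos (by omega), show -(M - K) = K - M by ring,
                    show K - (K - M) = M by ring]
                  have hδval : δ = T * M + 1 := by omega
                  have hgoal : T * M + 1 ≤ |x - y| := by omega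
                  nlinarith
                · -- a ≤ -2
                  left
                  have h2 : a ≤ -2 := by omega
                  have hK0 : (0:ℤ) ≤ K := by omega
                  have hval : a * K ≤ (-2) * K := by
                    apply mul_le_mul_of_nonneg_right h2 hK0
                  rw [hFF, abs_of_nonpos (by omega)]
                  omega
              · -- a = 0
                right
                have hv : Flab T K M r - Flab T K M s = M := by rw [hFF, ha0]; ring
                rw [hv, abs_of_nonneg (by omega), show K - M = M by omega]
                have hδval : δ = T * M + 2 := by omega
                have hgoal : T * M + 1 ≤ |x - y| := by omega
                nlinarith
              · -- a ≥ 1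
                left
                have h1 : 1 ≤ a := by omega
                have hval : 1 * K ≤ a * K := by
                  apply mul_le_mul_of_nonneg_right h1 (by omega)
                rw [hFF, abs_of_nonneg (by omega : (0:ℤ) ≤ M + a * K)]
                omega
          · -- both in B
            have hrB : ¬ r ≤ T * M + 1 := by omega
            left
            have hFF : Flab T K M r - Flab T K M s = δ * K := by
              unfold Flab
              rw [if_neg hrB, if_neg hsA, hδ]; ring
            rw [hFF, abs_of_nonneg (mul_nonneg hδ0 (by omega))]
            nlinarith
      intro x y hxy
      rcases le_total (y % P) (x % P) with h | h
      · exact symmkey x y hxy h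
      · have := symmkey y x hxy.symm h
        rwa [abs_sub_comm (Flab T K M (y % P)) (Flab T K M (x % P)), abs_sub_comm y x] at this
    intro x y hxy
    have hd := dist_lb t ht x y
    have hd1 : 1 ≤ ((distGraph {d : ℤ | 1 ≤ d ∧ d ≤ (t : ℤ)}).dist x y : ℤ) := by
      by_contra h
      have h0 : ((distGraph {d : ℤ | 1 ≤ d ∧ d ≤ (t : ℤ)}).dist x y : ℤ) = 0 := by
        have := Int.ofNat_nonneg ((distGraph {d : ℤ | 1 ≤ d ∧ d ≤ (t : ℤ)}).dist x y)
        omega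
      rw [h0, mul_zero] at hd
      have h1 : |x - y| ≤ 0 := hd
      have h2 := abs_nonneg (x - y)
      have h3 : x = y := by
        have : |x - y| = 0 := le_antisymm h1 h2
        have := abs_eq_zero.mp this
        omega
      exact hxy h3
    rw [hcast, hcast]
    rcases key x y hxy with hbig | hsmall
    · have : (k : ℤ) + 1 - ((distGraph {d : ℤ | 1 ≤ d ∧ d ≤ (t : ℤ)}).dist x y) ≤ K := by
        rw [hK]; omega
      exact le_trans this hbig
    · obtain ⟨Δ, hΔ⟩ : ∃ Δ : ℤ, Δ = |Flab T K M (x % P) - Flab T K M (y % P)| := ⟨_, rfl⟩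
      rw [← hΔ] at hsmall ⊢
      obtain ⟨D, hD⟩ : ∃ D : ℤ, D = ((distGraph {d : ℤ | 1 ≤ d ∧ d ≤ (t : ℤ)}).dist x y : ℤ) :=
        ⟨_, rfl⟩
      rw [← hD] at hd hd1 ⊢
      have h1 : T * (K - Δ) + 1 ≤ T * D := by
        calc T * (K - Δ) + 1 ≤ |x - y| := hsmall
          _ ≤ T * D := by rw [hT]; exact hd
      have h2 : K - Δ + 1 ≤ D := by nlinarith
      have hΔ0 : 0 ≤ Δ := hΔ ▸ abs_nonneg _
      omega
  · -- the bound
    intro x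
    have hub : Flab T K M (x % P) ≤ T * M * K + K := by
      have hr0 : 0 ≤ x % P := Int.emod_nonneg x (by omega)
      have hrP : x % P < P := Int.emod_lt_of_pos x hP0
      unfold Flab
      split
      · rename_i h
        calc (x % P) * K ≤ (T * M + 1) * K := by
              apply mul_le_mul_of_nonneg_right h (by omega)
          _ = T * M * K + K := by ring
      · rename_i h
        have : (x % P - (T * M + 2)) * K ≤ (T * M) * K := by
          apply mul_le_mul_of_nonneg_right (by omega) (by omega)
        omega
    have hcr : ((Flab T K M (x % P)).toNat : ℤ) ≤ T * M * K + K := by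
      rw [Int.toNat_of_nonneg (hFnn _ (Int.emod_nonneg x (by omega)))]
      exact hub
    have hcR : ((Flab T K M (x % P)).toNat : ℝ) ≤ ((T : ℝ) * M * K + K : ℝ) := by
      have h := (Int.cast_le (R := ℝ)).mpr hcr
      push_cast at h ⊢
      linarith
    calc ((Flab T K M (x % P)).toNat : ℝ) ≤ (T : ℝ) * M * K + K := hcR
      _ = ((t : ℝ) / 2) * (k : ℝ) ^ 2 + k := by
          rw [hT, hK, hM]
          have hkr : (k : ℝ) = 2 * (mn : ℝ) := by exact_mod_cast (by omega : k = 2 * mn)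
          push_cast
          rw [hkr]; ring
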